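/- Suppose ξ_1, ξ_2, ξ_3 are nonzero reals and w_12, w_13, w_23 are positive reals (interpreted as pairwise distances) satisfying H = 0 and L = 0, i.e. ξ_1 ξ_2 w_12^(α−2) + ξ_1 ξ_3 w_13^(α−2) + ξ_2 ξ_3 w_23^(α−2) = 0 and ξ_1 ξ_2 w_12^2 + ξ_1 ξ_3 w_13^2 + ξ_2 ξ_3 w_23^2 = 0. Then ξ_1 (w_13^(α−4) − w_12^(α−4)) / w_23^2 = ξ_2 (w_12^(α−4) − w_23^(α−4)) / w_13^2. -/
import Mathlib


theorem stmt_13 (α : ℝ) (ξ₁ ξ₂ ξ₃ w₁₂ w₁₃ w₂₃ : ℝ)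
    (hξ₁ : ξ₁ ≠ 0) (hξ₂ : ξ₂ ≠ 0) (hξ₃ : ξ₃ ≠ 0)
    (hw₁₂ : 0 < w₁₂) (hw₁₃ : 0 < w₁₃) (hw₂₃ : 0 < w₂₃)
    (hH : ξ₁ * ξ₂ * w₁₂ ^ (α - 2) + ξ₁ * ξ₃ * w₁₃ ^ (α - 2) + ξ₂ * ξ₃ * w₂₃ ^ (α - 2) = 0)
    (hL : ξ₁ * ξ₂ * w₁₂ ^ 2 + ξ₁ * ξ₃ * w₁₃ ^ 2 + ξ₂ * ξ₃ * w₂₃ ^ 2 = 0) :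
    ξ₁ * (w₁₃ ^ (α - 4) - w₁₂ ^ (α - 4)) / w₂₃ ^ 2
      = ξ₂ * (w₁₂ ^ (α - 4) - w₂₃ ^ (α - 4)) / w₁₃ ^ 2 := by
  have key : ∀ w : ℝ, 0 < w → w ^ (α - 2) = w ^ (α - 4) * w ^ (2 : ℕ) := by
    intro w hw
    rw [← Real.rpow_natCast w 2, ← Real.rpow_add hw]
    ring_nf
  rw [key _ hw₁₂, key _ hw₁₃, key _ hw₂₃] at hH
  have hy := hw₁₃.ne'
  have hz := hw₂₃.ne'
  have main : ξ₃ * (ξ₁ * (w₁₃ ^ (α - 4) - w₁₂ ^ (α - 4)) * w₁₃ ^ 2)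
      = ξ₃ * (ξ₂ * (w₁₂ ^ (α - 4) - w₂₃ ^ (α - 4)) * w₂₃ ^ 2) := by
    linear_combination hH - w₁₂ ^ (α - 4) * hL
  have main' := mul_left_cancel₀ hξ₃ main
  field_simp
  linear_combination main'
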